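/- Two distinct vertices (i,j) and (h,l) are conflicting if and only if there exists p ∈ {-1,0,1} (as integers) such that (h = i + p and l ≠ j + p) or (l = j + p and h ≠ i + p). -/

import Mathlib

/-- `(i, j)` is a vertex: `A i = B j` and `A (i+1) = B (j+1)`,
with the required index bounds (`i, j ≤ n - 2`, i.e. `i + 1 < n` and `j + 1 < n`). -/
def IsVertex {Γ : Type*} (n : ℕ) (A B : Fin n → Γ) (i j : ℕ) : Prop :=
  ∃ (hi : i + 1 < n) (hj : j + 1 < n),
    A ⟨i, Nat.lt_of_succ_lt hi⟩ = B ⟨j, Nat.lt_of_succ_lt hj⟩ ∧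
    A ⟨i + 1, hi⟩ = B ⟨j + 1, hj⟩

private lemma adjust_perm {Γ : Type*} {n : ℕ} {A B : Fin n → Γ} (π₀ : Equiv.Perm (Fin n))
    (hπ : ∀ x, A x = B (π₀ x)) (a b : Fin n) (hab : A a = B b) :
    ∃ π : Equiv.Perm (Fin n), (∀ x, A x = B (π x)) ∧ π a = b ∧
      ∀ x, x ≠ a → π₀ x ≠ b → π x = π₀ x := by
  refine ⟨π₀ * Equiv.swap a (π₀⁻¹ b), ?_, ?_, ?_⟩
  · intro x
    rcases eq_or_ne x a with rfl | hx
    · simpa using hab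
    rcases eq_or_ne x (π₀⁻¹ b) with rfl | hx'
    · calc A (π₀⁻¹ b) = B (π₀ (π₀⁻¹ b)) := hπ _
        _ = B b := by simp
        _ = A a := hab.symm
        _ = B ((π₀ * Equiv.swap a (π₀⁻¹ b)) (π₀⁻¹ b)) := by
              rw [Equiv.Perm.mul_apply, Equiv.swap_apply_right]; exact hπ a
    · rw [Equiv.Perm.mul_apply, Equiv.swap_apply_of_ne_of_ne hx hx']; exact hπ x
  · simp
  · intro x hxa hxb
    have hx' : x ≠ π₀⁻¹ b := fun hx => hxb (by rw [hx]; simp)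
    rw [Equiv.Perm.mul_apply, Equiv.swap_apply_of_ne_of_ne hxa hx']

private lemma multi_perm {Γ : Type*} {n : ℕ} {A B : Fin n → Γ} (π₀ : Equiv.Perm (Fin n))
    (hπ : ∀ x, A x = B (π₀ x)) :
    ∀ L : List (Fin n × Fin n),
      L.Pairwise (fun p q => p.1 ≠ q.1 ∧ p.2 ≠ q.2) →
      (∀ p ∈ L, A p.1 = B p.2) →
      ∃ π : Equiv.Perm (Fin n), (∀ x, A x = B (π x)) ∧ ∀ p ∈ L, π p.1 = p.2 := by
  intro L
  induction L with
  | nil => exact fun _ _ => ⟨π₀, hπ, by simp⟩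
  | cons q L ih =>
    intro hpw hcomp
    obtain ⟨π₁, hπ₁, hL⟩ := ih (List.Pairwise.of_cons hpw)
      (fun p hp => hcomp p (List.mem_cons_of_mem _ hp))
    obtain ⟨π₂, hπ₂, hq, hrest⟩ := adjust_perm π₁ hπ₁ q.1 q.2 (hcomp q (List.mem_cons_self))
    refine ⟨π₂, hπ₂, ?_⟩
    intro p hp
    rcases List.mem_cons.mp hp with rfl | hp
    · exact hq
    · have hd := (List.pairwise_cons.mp hpw).1 p hp
      rw [hrest p.1 hd.1.symm (by rw [hL p hp]; exact hd.2.symm), hL p hp]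

theorem stmt_3 {Γ : Type*} (n : ℕ) (hn : 2 ≤ n) (A B : Fin n → Γ)
    (σ : Equiv.Perm (Fin n)) (hB : B = A ∘ σ)
    (i j h l : ℕ) (hi : i + 1 < n) (hj : j + 1 < n) (hh : h + 1 < n) (hl : l + 1 < n)
    (hij : IsVertex n A B i j) (hhl : IsVertex n A B h l)
    (hne : (i, j) ≠ (h, l)) :
    (¬ ∃ π : Equiv.Perm (Fin n),
        (∀ x, A x = B (π x)) ∧
        π ⟨i, Nat.lt_of_succ_lt hi⟩ = ⟨j, Nat.lt_of_succ_lt hj⟩ ∧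
        π ⟨i + 1, hi⟩ = ⟨j + 1, hj⟩ ∧
        π ⟨h, Nat.lt_of_succ_lt hh⟩ = ⟨l, Nat.lt_of_succ_lt hl⟩ ∧
        π ⟨h + 1, hh⟩ = ⟨l + 1, hl⟩)
      ↔
    (∃ p : ℤ, (p = -1 ∨ p = 0 ∨ p = 1) ∧
      (((h : ℤ) = (i : ℤ) + p ∧ (l : ℤ) ≠ (j : ℤ) + p) ∨
       ((l : ℤ) = (j : ℤ) + p ∧ (h : ℤ) ≠ (i : ℤ) + p))) := by
  obtain ⟨hi', hj', hAij1, hAij2⟩ := hij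
  obtain ⟨hh', hl', hAhl1, hAhl2⟩ := hhl
  have hπ₀ : ∀ x, A x = B (σ.symm x) := by intro x; rw [hB]; simp
  constructor
  · intro hno
    by_contra hp
    push_neg at hp
    apply hno
    have H0 := hp 0 (Or.inr (Or.inl rfl))
    have H1 := hp 1 (Or.inr (Or.inr rfl))
    have Hm := hp (-1) (Or.inl rfl)
    rcases (by omega : h = i ∨ h = i + 1 ∨ i = h + 1 ∨ (i + 2 ≤ h ∨ h + 2 ≤ i)) with
      hc | hc | hc | hc
    · -- h = i forces l = j, contradicting hne
      have e2 : (l : ℤ) = j + 0 := H0.1 (by omega)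
      have : l = j := by omega
      exact absurd (by rw [hc, this]) hne
    · -- h = i + 1
      have hl1 : l = j + 1 := by have := H1.1 (by omega); omega
      subst hc; subst hl1
      obtain ⟨π, hπ', hgL⟩ := multi_perm σ.symm hπ₀
        [(⟨i, by omega⟩, ⟨j, by omega⟩), (⟨i + 1, by omega⟩, ⟨j + 1, by omega⟩),
         (⟨i + 2, by omega⟩, ⟨j + 2, by omega⟩)]
        (by simp [List.pairwise_cons, Fin.ext_iff])
        (by
          rintro p hp'
          simp only [List.mem_cons, List.not_mem_nil, or_false] at hp'
          rcases hp' with rfl | rfl | rfl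
          exacts [hAij1, hAij2, hAhl2])
      exact ⟨π, hπ', hgL _ (List.mem_cons_self), hgL _ (List.mem_cons_of_mem _ (List.mem_cons_self)), hgL _ (List.mem_cons_of_mem _ (List.mem_cons_self)), hgL _ (List.mem_cons_of_mem _ (List.mem_cons_of_mem _ (List.mem_cons_self)))⟩
    · -- i = h + 1
      have hl1 : j = l + 1 := by have := Hm.1 (by omega); omega
      subst hc; subst hl1
      obtain ⟨π, hπ', hgL⟩ := multi_perm σ.symm hπ₀
        [(⟨h, by omega⟩, ⟨l, by omega⟩), (⟨h + 1, by omega⟩, ⟨l + 1, by omega⟩),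
         (⟨h + 2, by omega⟩, ⟨l + 2, by omega⟩)]
        (by simp [List.pairwise_cons, Fin.ext_iff])
        (by
          rintro p hp'
          simp only [List.mem_cons, List.not_mem_nil, or_false] at hp'
          rcases hp' with rfl | rfl | rfl
          exacts [hAhl1, hAhl2, hAij2])
      exact ⟨π, hπ', hgL _ (List.mem_cons_of_mem _ (List.mem_cons_self)), hgL _ (List.mem_cons_of_mem _ (List.mem_cons_of_mem _ (List.mem_cons_self))), hgL _ (List.mem_cons_self), hgL _ (List.mem_cons_of_mem _ (List.mem_cons_self))⟩
    · -- |h - i| ≥ 2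
      have hne1 : l ≠ j := fun e => by have := H0.2 (by omega); omega
      have hne2 : l ≠ j + 1 := fun e => by have := H1.2 (by omega); omega
      have hne3 : j ≠ l + 1 := fun e => by have := Hm.2 (by omega); omega
      obtain ⟨π, hπ', hgL⟩ := multi_perm σ.symm hπ₀
        [(⟨i, by omega⟩, ⟨j, by omega⟩), (⟨i + 1, by omega⟩, ⟨j + 1, by omega⟩),
         (⟨h, by omega⟩, ⟨l, by omega⟩), (⟨h + 1, by omega⟩, ⟨l + 1, by omega⟩)]
        (by simp [List.pairwise_cons, Fin.ext_iff]; omega)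
        (by
          rintro p hp'
          simp only [List.mem_cons, List.not_mem_nil, or_false] at hp'
          rcases hp' with rfl | rfl | rfl | rfl
          exacts [hAij1, hAij2, hAhl1, hAhl2])
      exact ⟨π, hπ', hgL _ (List.mem_cons_self), hgL _ (List.mem_cons_of_mem _ (List.mem_cons_self)), hgL _ (List.mem_cons_of_mem _ (List.mem_cons_of_mem _ (List.mem_cons_self))), hgL _ (List.mem_cons_of_mem _ (List.mem_cons_of_mem _ (List.mem_cons_of_mem _ (List.mem_cons_self))))⟩
  · rintro ⟨p, hpm, hpc⟩ ⟨π, hπA, e1, e2, e3, e4⟩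
    rcases hpm with rfl | rfl | rfl
    · rcases hpc with ⟨ha, hb⟩ | ⟨ha, hb⟩
      · have hi1 : i = h + 1 := by omega
        subst hi1
        have : (⟨j, Nat.lt_of_succ_lt hj⟩ : Fin n) = ⟨l + 1, hl⟩ := e1.symm.trans e4
        have : j = l + 1 := by simpa [Fin.ext_iff] using this
        omega
      · have hj1 : j = l + 1 := by omega
        subst hj1
        have heq : (⟨i, Nat.lt_of_succ_lt hi⟩ : Fin n) = ⟨h + 1, hh⟩ :=
          π.injective (e1.trans e4.symm)
        have : i = h + 1 := by simpa [Fin.ext_iff] using heq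
        omega
    · rcases hpc with ⟨ha, hb⟩ | ⟨ha, hb⟩
      · have hh1 : h = i := by omega
        subst hh1
        have : (⟨j, Nat.lt_of_succ_lt hj⟩ : Fin n) = ⟨l, Nat.lt_of_succ_lt hl⟩ :=
          e1.symm.trans e3
        have : j = l := by simpa [Fin.ext_iff] using this
        omega
      · have hl1 : l = j := by omega
        subst hl1
        have : (⟨i, Nat.lt_of_succ_lt hi⟩ : Fin n) = ⟨h, Nat.lt_of_succ_lt hh⟩ :=
          π.injective (e1.trans e3.symm)
        have : i = h := by simpa [Fin.ext_iff] using this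
        omega
    · rcases hpc with ⟨ha, hb⟩ | ⟨ha, hb⟩
      · have hh1 : h = i + 1 := by omega
        subst hh1
        have : (⟨j + 1, hj⟩ : Fin n) = ⟨l, Nat.lt_of_succ_lt hl⟩ := e2.symm.trans e3
        have : j + 1 = l := by simpa [Fin.ext_iff] using this
        omega
      · have hl1 : l = j + 1 := by omega
        subst hl1
        have : (⟨i + 1, hi⟩ : Fin n) = ⟨h, Nat.lt_of_succ_lt hh⟩ :=
          π.injective (e2.trans e3.symm)
        have : i + 1 = h := by simpa [Fin.ext_iff] using this
        omega
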